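/- Fix N ≥ 1 and let θ_0, ..., θ_N be the OGM step-size sequence. Let h be the OGM coefficients defined by h_{i+1,k} = (1/θ_{i+1})·(2θ_k - sum_{j=k+1}^{i} h_{j,k}) for k < i and h_{i+1,i} = 1 + (2θ_i - 1)/θ_{i+1}. Then sum_{k=0}^{j-1} h_{j,k} = θ_j for j = 1,...,N-1, and sum_{k=0}^{N-1} h_{N,k} = (θ_N + 1)/2. -/
import Mathlib


noncomputable def tseq : ℕ → ℝ
  | 0 => 1
  | i + 1 => (1 + Real.sqrt (1 + 4 * (tseq i) ^ 2)) / 2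

noncomputable def θseq (N i : ℕ) : ℝ :=
  if i < N then tseq i else (1 + Real.sqrt (1 + 8 * (tseq (N - 1)) ^ 2)) / 2

lemma tseq_pos (i : ℕ) : 0 < tseq i := by
  cases i with
  | zero => norm_num [tseq]
  | succ n =>
    have := Real.sqrt_nonneg (1 + 4 * (tseq n) ^ 2)
    simp only [tseq]
    linarith

lemma tseq_sq (i : ℕ) : tseq (i + 1) ^ 2 = tseq (i + 1) + tseq i ^ 2 := by
  have h1 : (0:ℝ) ≤ 1 + 4 * (tseq i) ^ 2 := by positivity
  have h2 : Real.sqrt (1 + 4 * (tseq i) ^ 2) ^ 2 = 1 + 4 * (tseq i) ^ 2 :=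
    Real.sq_sqrt h1
  simp only [tseq]
  nlinarith [h2]

lemma sum_tseq (i : ℕ) : ∑ k ∈ Finset.range i, tseq k = tseq i ^ 2 - tseq i := by
  induction i with
  | zero => norm_num [tseq]
  | succ n ih =>
    rw [Finset.sum_range_succ, ih]
    have := tseq_sq n
    linarith

/-- Row sums of the OGM coefficients: `∑_{k<j} h_{j,k} = θ_j` for `1 ≤ j ≤ N-1`,
and `∑_{k<N} h_{N,k} = (θ_N + 1)/2`. -/
theorem stmt_8 (N : ℕ) (hN : 1 ≤ N) (h : ℕ → ℕ → ℝ)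
    (hO2a : ∀ i k, k < i → i + 1 ≤ N →
      h (i + 1) k = (1 / θseq N (i + 1)) *
        (2 * θseq N k - ∑ j ∈ Finset.Ico (k + 1) (i + 1), h j k))
    (hO2b : ∀ i, i + 1 ≤ N → h (i + 1) i = 1 + (2 * θseq N i - 1) / θseq N (i + 1)) :
    (∀ j, 1 ≤ j → j < N → ∑ k ∈ Finset.range j, h j k = θseq N j) ∧
    (∑ k ∈ Finset.range N, h N k = (θseq N N + 1) / 2) := by
  have hθNval : θseq N N = (1 + Real.sqrt (1 + 8 * (tseq (N - 1)) ^ 2)) / 2 := by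
    simp [θseq]
  have hθNpos : 0 < θseq N N := by
    rw [hθNval]
    have := Real.sqrt_nonneg (1 + 8 * (tseq (N - 1)) ^ 2)
    linarith
  have hθNsq : θseq N N ^ 2 = θseq N N + 2 * tseq (N - 1) ^ 2 := by
    have h1 : (0:ℝ) ≤ 1 + 8 * (tseq (N - 1)) ^ 2 := by positivity
    have h2 := Real.sq_sqrt h1
    rw [hθNval]
    nlinarith [h2]
  have key : ∀ m, m ≤ N → 1 ≤ m →
      (∑ k ∈ Finset.range m, h m k) =
        (if m < N then tseq m else (θseq N N + 1) / 2) := by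
    intro m
    induction m using Nat.strong_induction_on with
    | _ m ih =>
      intro hmN hm1
      obtain ⟨i, rfl⟩ : ∃ i, m = i + 1 := ⟨m - 1, by omega⟩
      rw [Finset.sum_range_succ, hO2b i hmN,
        Finset.sum_congr rfl (fun k hk => hO2a i k (Finset.mem_range.mp hk) hmN),
        ← Finset.mul_sum, Finset.sum_sub_distrib]
      -- double sum swap
      have hswap : (∑ k ∈ Finset.range i, ∑ j ∈ Finset.Ico (k + 1) (i + 1), h j k)
          = ∑ j ∈ Finset.Ico 1 (i + 1), ∑ k ∈ Finset.range j, h j k := by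
        refine Finset.sum_comm' ?_
        intro k j
        simp only [Finset.mem_range, Finset.mem_Ico]
        omega
      have hD : (∑ j ∈ Finset.Ico 1 (i + 1), ∑ k ∈ Finset.range j, h j k)
          = tseq i ^ 2 - 1 := by
        rw [Finset.sum_congr rfl (fun j hj => by
          have hj' := Finset.mem_Ico.mp hj
          rw [ih j (by omega) (by omega) (by omega), if_pos (by omega)])]
        have h1 : (∑ j ∈ Finset.Ico 1 (i + 1), tseq j)
            = ∑ j ∈ Finset.range (i + 1), tseq j - tseq 0 := by
          rw [Finset.range_eq_Ico, ← Finset.sum_Ico_consecutive _ (by omega : 0 ≤ 1)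
            (by omega : 1 ≤ i + 1)]
          simp
        rw [h1, sum_tseq]
        have h2 := tseq_sq i
        have h0 : tseq 0 = (1:ℝ) := rfl
        rw [h0]
        linarith
      have hΘsum : (∑ k ∈ Finset.range i, 2 * θseq N k)
          = 2 * (tseq i ^ 2 - tseq i) := by
        rw [Finset.sum_congr rfl (fun k hk => by
          have := Finset.mem_range.mp hk
          rw [show θseq N k = tseq k from if_pos (by omega)]),
          ← Finset.mul_sum, sum_tseq]
      have hΘi : θseq N i = tseq i := if_pos (by omega)
      rw [hswap, hD, hΘsum, hΘi]
      by_cases hlt : i + 1 < N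
      · have hΘ : θseq N (i + 1) = tseq (i + 1) := if_pos hlt
        rw [hΘ, if_pos hlt]
        have hp := tseq_pos (i + 1)
        have hs := tseq_sq i
        field_simp
        nlinarith [hs, hp]
      · have hiN : i + 1 = N := by omega
        rw [if_neg hlt]
        have hΘ : θseq N (i + 1) = θseq N N := by rw [hiN]
        have hti : tseq i = tseq (N - 1) := by rw [show N - 1 = i from by omega]
        rw [hΘ, hti]
        field_simp
        nlinarith [hθNsq, hθNpos]
  constructor
  · intro j hj1 hjN
    rw [key j (by omega) hj1, if_pos hjN, θseq, if_pos hjN]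
  · rw [key N le_rfl hN, if_neg (lt_irrefl N)]
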